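/- Let T be a distance convex nonexpansive mapping on a complete global Alexandrov NPC space (N,d) with a bounded orbit {p,Tp,T²p,…}, and let s ∈ co{p,Tp,T²p,…}. Then for every ε>0 there is N∈ℕ such that d(mₙ(p), mₙ(s)) < ε for all n ≥ N, where mₙ(x) denotes the mean of the first n iterates of x under T. -/

import Mathlib

open Set

/-- A (constant-speed, unit-interval) geodesic from `p` to `q`. -/
def IsGeodesic {N : Type*} [MetricSpace N] (γ : ℝ → N) (p q : N) : Prop :=
  γ 0 = p ∧ γ 1 = q ∧
    ∀ s ∈ Icc (0:ℝ) 1, ∀ t ∈ Icc (0:ℝ) 1, dist (γ s) (γ t) = |s - t| * dist p q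

/-- A geodesic length space: any two points are joined by a geodesic. -/
def GeodesicSpace (N : Type*) [MetricSpace N] : Prop :=
  ∀ p q : N, ∃ γ : ℝ → N, IsGeodesic γ p q

/-- Global Alexandrov NPC (CAT(0)) space. -/
def NPCSpace (N : Type*) [MetricSpace N] : Prop :=
  GeodesicSpace N ∧
    ∀ (p q r : N) (γ : ℝ → N), IsGeodesic γ p r → ∀ t ∈ Icc (0:ℝ) 1,
      dist q (γ t) ^ 2 ≤
        (1 - t) * dist q p ^ 2 + t * dist q r ^ 2 - t * (1 - t) * dist p r ^ 2

/-- A subset is convex if any two of its points are joined by a geodesic lying in the set. -/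
def ConvexSubset {N : Type*} [MetricSpace N] (C : Set N) : Prop :=
  ∀ p ∈ C, ∀ q ∈ C, ∃ γ : ℝ → N, IsGeodesic γ p q ∧ ∀ t ∈ Icc (0:ℝ) 1, γ t ∈ C

/-- `C` is the convex hull of `S`: the smallest convex subset containing `S`. -/
def IsConvexHull {N : Type*} [MetricSpace N] (S C : Set N) : Prop :=
  ConvexSubset C ∧ S ⊆ C ∧ ∀ D : Set N, ConvexSubset D → S ⊆ D → C ⊆ D

private lemma variance_aux {N : Type*} [MetricSpace N]
    (hN : NPCSpace N) (T : N → N) (m : ℕ → N → N)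
    (hm : ∀ n : ℕ, 0 < n → ∀ x r : N,
      (1 / (n : ℝ)) * ∑ i ∈ Finset.range n, dist (m n x) (T^[i] x) ^ 2 ≤
        (1 / (n : ℝ)) * ∑ i ∈ Finset.range n, dist r (T^[i] x) ^ 2)
    (n : ℕ) (hn : 0 < n) (x r : N) :
    dist (m n x) r ^ 2 ≤
      (1 / (n : ℝ)) * ∑ i ∈ Finset.range n, dist r (T^[i] x) ^ 2 -
      (1 / (n : ℝ)) * ∑ i ∈ Finset.range n, dist (m n x) (T^[i] x) ^ 2 := by
  obtain ⟨γ, hγ⟩ := hN.1 (m n x) r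
  have hnpos : (0:ℝ) < n := Nat.cast_pos.mpr hn
  set a := m n x with ha
  set Sa := ∑ i ∈ Finset.range n, dist a (T^[i] x) ^ 2 with hSa
  set Sr := ∑ i ∈ Finset.range n, dist r (T^[i] x) ^ 2 with hSr
  set A := dist a r ^ 2 with hA
  have key : ∀ t ∈ Set.Icc (0:ℝ) 1,
      Sa ≤ (1 - t) * Sa + t * Sr - (n:ℝ) * (t * (1 - t) * A) := by
    intro t ht
    have hterm : ∀ i ∈ Finset.range n, dist (γ t) (T^[i] x) ^ 2 ≤
        (1 - t) * dist a (T^[i] x) ^ 2 + t * dist r (T^[i] x) ^ 2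
          - t * (1 - t) * A := by
      intro i _
      have h := hN.2 a (T^[i] x) r γ hγ t ht
      rw [dist_comm (γ t) (T^[i] x), dist_comm a (T^[i] x), dist_comm r (T^[i] x), hA]
      linarith [h]
    have hsum : ∑ i ∈ Finset.range n, dist (γ t) (T^[i] x) ^ 2 ≤
        (1 - t) * Sa + t * Sr - (n:ℝ) * (t * (1 - t) * A) := by
      calc ∑ i ∈ Finset.range n, dist (γ t) (T^[i] x) ^ 2
          ≤ ∑ i ∈ Finset.range n, ((1 - t) * dist a (T^[i] x) ^ 2
              + t * dist r (T^[i] x) ^ 2 - t * (1 - t) * A) :=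
            Finset.sum_le_sum hterm
        _ = (1 - t) * Sa + t * Sr - (n:ℝ) * (t * (1 - t) * A) := by
            rw [hSa, hSr]
            rw [Finset.sum_sub_distrib, Finset.sum_add_distrib,
              ← Finset.mul_sum, ← Finset.mul_sum, Finset.sum_const,
              Finset.card_range, nsmul_eq_mul]
    have hmin := hm n hn x (γ t)
    have hmin' : Sa ≤ ∑ i ∈ Finset.range n, dist (γ t) (T^[i] x) ^ 2 := by
      have h1n : (0:ℝ) < 1 / n := by positivity
      exact le_of_mul_le_mul_left (by simpa [hSa] using hmin) h1n
    linarith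
  have hB : 0 ≤ Sr - Sa := by
    have h := key 1 ⟨zero_le_one, le_refl 1⟩
    nlinarith [h]
  have key2 : ∀ t : ℝ, 0 < t → t ≤ 1 → (n:ℝ) * (1 - t) * A ≤ Sr - Sa := by
    intro t ht0 ht1
    have h := key t ⟨ht0.le, ht1⟩
    have h' : t * ((n:ℝ) * (1 - t) * A) ≤ t * (Sr - Sa) := by nlinarith [h]
    exact le_of_mul_le_mul_left h' ht0
  by_contra hcon
  push_neg at hcon
  have hcon' : Sr - Sa < (n:ℝ) * A := by
    have h := mul_lt_mul_of_pos_left hcon hnpos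
    have hne : (n:ℝ) ≠ 0 := ne_of_gt hnpos
    calc Sr - Sa = (n:ℝ) * (1 / (n:ℝ) * Sr - 1 / (n:ℝ) * Sa) := by
          field_simp
        _ < (n:ℝ) * A := h
  have hApos : 0 < A := by nlinarith [hB, hcon', hnpos]
  set t := ((n:ℝ) * A - (Sr - Sa)) / (2 * ((n:ℝ) * A)) with htdef
  have hnA : 0 < (n:ℝ) * A := by positivity
  have ht0 : 0 < t := div_pos (by linarith) (by linarith)
  have ht1 : t ≤ 1 := by
    rw [div_le_one (by linarith)]
    linarith
  have hkey := key2 t ht0 ht1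
  have htmul : t * ((n:ℝ) * A) = ((n:ℝ) * A - (Sr - Sa)) / 2 := by
    rw [htdef]
    field_simp
  nlinarith [hkey, htmul]

private lemma orb_close_aux {N : Type*} [MetricSpace N]
    (hN : NPCSpace N) (T : N → N) (m : ℕ → N → N)
    (hm : ∀ n : ℕ, 0 < n → ∀ x r : N,
      (1 / (n : ℝ)) * ∑ i ∈ Finset.range n, dist (m n x) (T^[i] x) ^ 2 ≤
        (1 / (n : ℝ)) * ∑ i ∈ Finset.range n, dist r (T^[i] x) ^ 2)
    (p : N) (D₀ : ℝ) (hD₀ : ∀ j k : ℕ, dist (T^[j] p) (T^[k] p) ≤ D₀)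
    (i : ℕ) (ε : ℝ) (hε : 0 < ε) :
    ∃ N₀ : ℕ, ∀ n ≥ N₀, dist (m n p) (m n (T^[i] p)) < ε := by
  have hD₀0 : (0:ℝ) ≤ D₀ := le_trans dist_nonneg (hD₀ 0 0)
  have hnear : ∀ n : ℕ, 0 < n → ∀ j : ℕ, dist (m n (T^[j] p)) (T^[j] p) ≤ D₀ := by
    intro n hn j
    have hnpos : (0:ℝ) < n := Nat.cast_pos.mpr hn
    have v := variance_aux hN T m hm n hn (T^[j] p) (T^[j] p)
    have hsum1 : ∑ k ∈ Finset.range n, dist (T^[j] p) (T^[k] (T^[j] p)) ^ 2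
        ≤ (n:ℝ) * D₀ ^ 2 := by
      have := Finset.sum_le_card_nsmul (Finset.range n)
        (fun k => dist (T^[j] p) (T^[k] (T^[j] p)) ^ 2) (D₀ ^ 2)
        (fun k _ => by
          show dist (T^[j] p) (T^[k] (T^[j] p)) ^ 2 ≤ D₀ ^ 2
          have h1 : dist (T^[j] p) (T^[k] (T^[j] p)) ≤ D₀ := by
            rw [← Function.iterate_add_apply]
            exact hD₀ j (k + j)
          nlinarith [(dist_nonneg : (0:ℝ) ≤ dist (T^[j] p) (T^[k] (T^[j] p)))])
      simpa [Finset.card_range, nsmul_eq_mul] using this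
    have hsum2 : 0 ≤ ∑ k ∈ Finset.range n, dist (m n (T^[j] p)) (T^[k] (T^[j] p)) ^ 2 :=
      Finset.sum_nonneg fun k _ => sq_nonneg _
    have hd2 : dist (m n (T^[j] p)) (T^[j] p) ^ 2 ≤ D₀ ^ 2 := by
      have h1 : (1 / (n:ℝ)) * ∑ k ∈ Finset.range n, dist (T^[j] p) (T^[k] (T^[j] p)) ^ 2
          ≤ D₀ ^ 2 := by
        rw [div_mul_eq_mul_div, one_mul, div_le_iff₀ hnpos]
        linarith [hsum1]
      have h2 : 0 ≤ (1 / (n:ℝ)) * ∑ k ∈ Finset.range n,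
          dist (m n (T^[j] p)) (T^[k] (T^[j] p)) ^ 2 := by positivity
      linarith [v]
    exact le_of_pow_le_pow_left₀ two_ne_zero hD₀0 hd2
  have hfar : ∀ n : ℕ, 0 < n → ∀ j k : ℕ,
      dist (m n (T^[j] p)) (T^[k] p) ≤ 2 * D₀ := by
    intro n hn j k
    calc dist (m n (T^[j] p)) (T^[k] p)
        ≤ dist (m n (T^[j] p)) (T^[j] p) + dist (T^[j] p) (T^[k] p) :=
          dist_triangle _ _ _
      _ ≤ D₀ + D₀ := add_le_add (hnear n hn j) (hD₀ j k)
      _ = 2 * D₀ := by ring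
  set M : ℝ := (2 * D₀) ^ 2 with hM
  have hM0 : 0 ≤ M := sq_nonneg _
  obtain ⟨N₁, hN₁⟩ := exists_nat_gt (2 * (i:ℝ) * M / ε ^ 2)
  refine ⟨max (max N₁ 1) (i + 1), fun n hn => ?_⟩
  have hn1 : 1 ≤ n := le_trans (le_max_right N₁ 1) (le_trans (le_max_left _ _) hn)
  have hn0 : 0 < n := hn1
  have hni : i < n := lt_of_lt_of_le (Nat.lt_succ_self i) (le_trans (le_max_right _ _) hn)
  have hnN₁ : N₁ ≤ n := le_trans (le_max_left N₁ 1) (le_trans (le_max_left _ _) hn)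
  have hnpos : (0:ℝ) < n := Nat.cast_pos.mpr hn0
  set q := T^[i] p with hq
  have hshift : ∀ r : N, ∑ k ∈ Finset.range n, dist r (T^[k] q) ^ 2
      = ∑ k ∈ Finset.Ico i (n + i), dist r (T^[k] p) ^ 2 := by
    intro r
    rw [Finset.sum_Ico_eq_sum_range]
    simp only [Nat.add_sub_cancel]
    refine Finset.sum_congr rfl fun k _ => ?_
    rw [hq, add_comm i k, Function.iterate_add_apply]
  have hbound : ∀ r : N, (∀ k : ℕ, dist r (T^[k] p) ≤ 2 * D₀) →
      (∑ k ∈ Finset.range n, dist r (T^[k] p) ^ 2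
        ≤ ∑ k ∈ Finset.range n, dist r (T^[k] q) ^ 2 + (i:ℝ) * M) ∧
      (∑ k ∈ Finset.range n, dist r (T^[k] q) ^ 2
        ≤ ∑ k ∈ Finset.range n, dist r (T^[k] p) ^ 2 + (i:ℝ) * M) := by
    intro r hr
    have hfM : ∀ k : ℕ, dist r (T^[k] p) ^ 2 ≤ M := fun k => by
      have := hr k
      nlinarith [(dist_nonneg : (0:ℝ) ≤ dist r (T^[k] p))]
    have e1 : ∑ k ∈ Finset.range n, dist r (T^[k] p) ^ 2
        = ∑ k ∈ Finset.Ico 0 i, dist r (T^[k] p) ^ 2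
          + ∑ k ∈ Finset.Ico i n, dist r (T^[k] p) ^ 2 := by
      rw [Finset.range_eq_Ico, ← Finset.sum_Ico_consecutive _ (Nat.zero_le i) hni.le]
    have e2 : ∑ k ∈ Finset.range n, dist r (T^[k] q) ^ 2
        = ∑ k ∈ Finset.Ico i n, dist r (T^[k] p) ^ 2
          + ∑ k ∈ Finset.Ico n (n + i), dist r (T^[k] p) ^ 2 := by
      rw [hshift r, ← Finset.sum_Ico_consecutive _ hni.le (Nat.le_add_right n i)]
    have b1 : ∑ k ∈ Finset.Ico 0 i, dist r (T^[k] p) ^ 2 ≤ (i:ℝ) * M := by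
      have := Finset.sum_le_card_nsmul (Finset.Ico 0 i)
        (fun k => dist r (T^[k] p) ^ 2) M (fun k _ => hfM k)
      simpa [Nat.card_Ico, nsmul_eq_mul] using this
    have b2 : ∑ k ∈ Finset.Ico n (n + i), dist r (T^[k] p) ^ 2 ≤ (i:ℝ) * M := by
      have := Finset.sum_le_card_nsmul (Finset.Ico n (n + i))
        (fun k => dist r (T^[k] p) ^ 2) M (fun k _ => hfM k)
      simpa [Nat.card_Ico, nsmul_eq_mul] using this
    have b3 : 0 ≤ ∑ k ∈ Finset.Ico 0 i, dist r (T^[k] p) ^ 2 :=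
      Finset.sum_nonneg fun k _ => sq_nonneg _
    have b4 : 0 ≤ ∑ k ∈ Finset.Ico n (n + i), dist r (T^[k] p) ^ 2 :=
      Finset.sum_nonneg fun k _ => sq_nonneg _
    constructor <;> linarith
  have hk_p : ∀ k : ℕ, dist (m n p) (T^[k] p) ≤ 2 * D₀ := by
    intro k
    have := hfar n hn0 0 k
    simpa using this
  have hk_q : ∀ k : ℕ, dist (m n q) (T^[k] p) ≤ 2 * D₀ := fun k => hfar n hn0 i k
  have v := variance_aux hN T m hm n hn0 p (m n q)
  have h1 := (hbound (m n q) hk_q).1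
  have h3 := (hbound (m n p) hk_p).2
  have h2 : ∑ k ∈ Finset.range n, dist (m n q) (T^[k] q) ^ 2
      ≤ ∑ k ∈ Finset.range n, dist (m n p) (T^[k] q) ^ 2 := by
    have hmin := hm n hn0 q (m n p)
    have h1n : (0:ℝ) < 1 / n := by positivity
    exact le_of_mul_le_mul_left hmin h1n
  have hd2 : dist (m n p) (m n q) ^ 2 ≤ 2 * (i:ℝ) * M / n := by
    have hsplit : ∑ k ∈ Finset.range n, dist (m n q) (T^[k] p) ^ 2
        ≤ ∑ k ∈ Finset.range n, dist (m n p) (T^[k] p) ^ 2 + 2 * (i:ℝ) * M := by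
      linarith
    have hv' : dist (m n p) (m n q) ^ 2 ≤ (1 / (n:ℝ)) * (2 * (i:ℝ) * M) := by
      have hmono : (1 / (n:ℝ)) * ∑ k ∈ Finset.range n, dist (m n q) (T^[k] p) ^ 2
          ≤ (1 / (n:ℝ)) * (∑ k ∈ Finset.range n, dist (m n p) (T^[k] p) ^ 2
            + 2 * (i:ℝ) * M) :=
        mul_le_mul_of_nonneg_left hsplit (by positivity)
      have heq : (1 / (n:ℝ)) * (∑ k ∈ Finset.range n, dist (m n p) (T^[k] p) ^ 2
          + 2 * (i:ℝ) * M)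
          = (1 / (n:ℝ)) * ∑ k ∈ Finset.range n, dist (m n p) (T^[k] p) ^ 2
            + (1 / (n:ℝ)) * (2 * (i:ℝ) * M) := by ring
      rw [heq] at hmono
      linarith [v]
    calc dist (m n p) (m n q) ^ 2 ≤ (1 / (n:ℝ)) * (2 * (i:ℝ) * M) := hv'
      _ = 2 * (i:ℝ) * M / n := by ring
  have hlt : 2 * (i:ℝ) * M / n < ε ^ 2 := by
    have hN₁n : (2 * (i:ℝ) * M) / ε ^ 2 < (n:ℝ) := lt_of_lt_of_le hN₁ (by exact_mod_cast hnN₁)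
    rw [div_lt_iff₀ hnpos]
    have h' : 2 * (i:ℝ) * M < ε ^ 2 * n := by
      have := (div_lt_iff₀ (by positivity : (0:ℝ) < ε ^ 2)).mp hN₁n
      linarith [this]
    linarith
  have hd2' : dist (m n p) (m n q) ^ 2 < ε ^ 2 := lt_of_le_of_lt hd2 hlt
  exact lt_of_pow_lt_pow_left₀ 2 hε.le hd2'

/-- for a distance convex nonexpansive map with bounded orbit of `p`
and any `s` in the convex hull of the orbit, the means of the iterates of `p` and
`s` become arbitrarily close. -/
theorem means_of_hull_point_close {N : Type*} [MetricSpace N] [CompleteSpace N]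
    (hN : NPCSpace N) (T : N → N)
    (hT : ∀ x y : N, dist (T x) (T y) ≤ dist x y)
    (m : ℕ → N → N)
    (hm : ∀ n : ℕ, 0 < n → ∀ x r : N,
      (1 / (n : ℝ)) * ∑ i ∈ Finset.range n, dist (m n x) (T^[i] x) ^ 2 ≤
        (1 / (n : ℝ)) * ∑ i ∈ Finset.range n, dist r (T^[i] x) ^ 2)
    (hmuniq : ∀ n : ℕ, 0 < n → ∀ x r : N,
      ((1 / (n : ℝ)) * ∑ i ∈ Finset.range n, dist r (T^[i] x) ^ 2 =
        (1 / (n : ℝ)) * ∑ i ∈ Finset.range n, dist (m n x) (T^[i] x) ^ 2) → r = m n x)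
    (hdc : ∀ n : ℕ, ∀ q : N, ∀ (γ : ℝ → N) (a b : N), IsGeodesic γ a b →
      ∀ t ∈ Icc (0:ℝ) 1,
        dist (m n (γ t)) q ^ 2 ≤
          (1 - t) * dist (m n a) q ^ 2 + t * dist (m n b) q ^ 2)
    (p : N) (hbdd : Bornology.IsBounded (Set.range fun i : ℕ => T^[i] p))
    (C : Set N) (hC : IsConvexHull (Set.range fun i : ℕ => T^[i] p) C)
    (s : N) (hs : s ∈ C) :
    ∀ ε > (0:ℝ), ∃ N₀ : ℕ, ∀ n ≥ N₀, dist (m n p) (m n s) < ε := by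
  classical
  rw [Metric.isBounded_iff] at hbdd
  obtain ⟨D₀, hD₀'⟩ := hbdd
  have hD₀ : ∀ j k : ℕ, dist (T^[j] p) (T^[k] p) ≤ D₀ := fun j k =>
    hD₀' ⟨j, rfl⟩ ⟨k, rfl⟩
  set D : Set N := {x | ∀ ε > (0:ℝ), ∃ N₀ : ℕ, ∀ n ≥ N₀, dist (m n p) (m n x) < ε}
    with hDdef
  have hDconv : ConvexSubset D := by
    intro a ha b hb
    obtain ⟨γ, hγ⟩ := hN.1 a b
    refine ⟨γ, hγ, ?_⟩
    intro t ht ε hε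
    obtain ⟨Na, hNa⟩ := ha (ε / 2) (by positivity)
    obtain ⟨Nb, hNb⟩ := hb (ε / 2) (by positivity)
    refine ⟨max Na Nb, fun n hn => ?_⟩
    have h1 := hdc n (m n p) γ a b hγ t ht
    have da := hNa n (le_trans (le_max_left _ _) hn)
    have db := hNb n (le_trans (le_max_right _ _) hn)
    rw [dist_comm (m n p)] at da db ⊢
    have hda2 : dist (m n a) (m n p) ^ 2 < (ε / 2) ^ 2 := by
      nlinarith [(dist_nonneg : (0:ℝ) ≤ dist (m n a) (m n p))]
    have hdb2 : dist (m n b) (m n p) ^ 2 < (ε / 2) ^ 2 := by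
      nlinarith [(dist_nonneg : (0:ℝ) ≤ dist (m n b) (m n p))]
    have hgoal2 : dist (m n (γ t)) (m n p) ^ 2 < ε ^ 2 := by
      have k1 : (1 - t) * dist (m n a) (m n p) ^ 2 ≤ (1 - t) * (ε / 2) ^ 2 :=
        mul_le_mul_of_nonneg_left hda2.le (by linarith [ht.2])
      have k2 : t * dist (m n b) (m n p) ^ 2 ≤ t * (ε / 2) ^ 2 :=
        mul_le_mul_of_nonneg_left hdb2.le ht.1
      have k3 : (1 - t) * (ε / 2) ^ 2 + t * (ε / 2) ^ 2 = (ε / 2) ^ 2 := by ring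
      have k4 : (ε / 2) ^ 2 < ε ^ 2 := by nlinarith [hε]
      linarith
    exact lt_of_pow_lt_pow_left₀ 2 hε.le hgoal2
  have horb : (Set.range fun i : ℕ => T^[i] p) ⊆ D := by
    rintro x ⟨i, rfl⟩
    intro ε hε
    exact orb_close_aux hN T m hm p D₀ hD₀ i ε hε
  exact hC.2.2 D hDconv horb hs
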